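/- For α ∈ (0,1), m, k ∈ ℕ₀ with 0 ≤ k < 2^m, the left-sided Riemann–Liouville fractional derivative of order α of the Faber–Schauder function e_{m,k} at t ∈ (0,1) equals (2^{m(α−1/2)}/Γ(2−α)) · ( (2^m t − k)₊^{1−α} − 2(2^m t − k − 0.5)₊^{1−α} + (2^m t − k − 1)₊^{1−α} ). -/

import Mathlib

open MeasureTheory Set

/-- The Haar function `H_{m,k}`. -/
noncomputable def Haar (m k : ℕ) (s : ℝ) : ℝ :=
  if s ∈ Set.Ioc ((k : ℝ) / 2 ^ m) (((k : ℝ) + 0.5) / 2 ^ m) then (2 : ℝ) ^ ((m : ℝ) / 2)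
  else if s ∈ Set.Ioc (((k : ℝ) + 0.5) / 2 ^ m) (((k : ℝ) + 1) / 2 ^ m) then
    -(2 : ℝ) ^ ((m : ℝ) / 2)
  else 0

/-- The Faber–Schauder function `e_{m,k}`, as the primitive of the Haar function. -/
noncomputable def FS (m k : ℕ) (t : ℝ) : ℝ := ∫ s in (0 : ℝ)..t, Haar m k s

/-- The left-sided Riemann–Liouville fractional derivative of order `α`. -/
noncomputable def Dleft (α : ℝ) (f : ℝ → ℝ) (t : ℝ) : ℝ :=
  (Real.Gamma (1 - α))⁻¹ *
    deriv (fun s : ℝ => ∫ u in (0 : ℝ)..s, (s - u) ^ (-α) * f u) t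

lemma integral_indicator_Ioc (a b t : ℝ) (ha : 0 ≤ a) (hab : a ≤ b) :
    ∫ s in (0:ℝ)..t, (Set.Ioc a b).indicator (fun _ => (1:ℝ)) s
      = max (t - a) 0 - max (t - b) 0 := by
  rcases le_total t 0 with h | h
  · rw [intervalIntegral.integral_of_ge h]
    rw [show ∫ s in Set.Ioc t 0, (Set.Ioc a b).indicator (fun _ => (1:ℝ)) s = 0 from ?_]
    · have h1 : max (t - a) 0 = 0 := max_eq_right (by linarith)
      have h2 : max (t - b) 0 = 0 := max_eq_right (by linarith)
      rw [h1, h2]; ring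
    · apply MeasureTheory.setIntegral_eq_zero_of_forall_eq_zero
      intro x hx
      rw [Set.indicator_of_notMem]
      rintro ⟨h1, h2⟩
      exact absurd h1 (by rcases hx with ⟨_, hx2⟩; linarith)
  · rw [intervalIntegral.integral_of_le h, MeasureTheory.integral_indicator measurableSet_Ioc,
      Measure.restrict_restrict measurableSet_Ioc, Set.Ioc_inter_Ioc,
      setIntegral_const, Real.volume_real_Ioc, smul_eq_mul, mul_one]
    rw [max_eq_left ha]
    rcases le_total t a with h1 | h1
    · have hm : min b t ≤ t := min_le_right _ _
      rw [max_eq_right (by linarith), max_eq_right (by linarith), max_eq_right (by linarith)]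
      ring
    · rcases le_total t b with h2 | h2
      · rw [min_eq_right h2, max_eq_left (show (0:ℝ) ≤ t - a by linarith),
          max_eq_right (show t - b ≤ 0 by linarith)]
        ring
      · rw [min_eq_left h2, max_eq_left (show (0:ℝ) ≤ b - a by linarith),
          max_eq_left (show (0:ℝ) ≤ t - a by linarith),
          max_eq_left (show (0:ℝ) ≤ t - b by linarith)]
        ring

lemma FS_eq (m k : ℕ) (t : ℝ) :
    FS m k t = 2 ^ ((m:ℝ)/2) * (max (t - (k:ℝ)/2^m) 0
      - 2 * max (t - ((k:ℝ)+0.5)/2^m) 0 + max (t - ((k:ℝ)+1)/2^m) 0) := by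
  set a := (k:ℝ)/2^m with ha'
  set b := ((k:ℝ)+0.5)/2^m with hb'
  set c := ((k:ℝ)+1)/2^m with hc'
  have h2m : (0:ℝ) < 2^m := by positivity
  have ha0 : 0 ≤ a := by positivity
  have hb0 : 0 ≤ b := by rw [hb']; positivity
  have hab : a ≤ b := by rw [ha', hb']; gcongr; norm_num
  have hbc : b ≤ c := by rw [hb', hc']; gcongr; norm_num
  have hind : ∀ u v : ℝ, IntervalIntegrable ((Set.Ioc u v).indicator (fun _ => (1:ℝ))) volume 0 t := by
    intro u v
    rw [intervalIntegrable_iff]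
    refine (integrable_indicator_iff measurableSet_Ioc).mpr ((integrableOn_const_iff).mpr (Or.inr ?_))
    rw [Measure.restrict_apply measurableSet_Ioc]
    exact lt_of_le_of_lt (measure_mono Set.inter_subset_left) measure_Ioc_lt_top
  have hH : ∀ s, Haar m k s = 2^((m:ℝ)/2) * ((Set.Ioc a b).indicator (fun _ => (1:ℝ)) s)
      - 2^((m:ℝ)/2) * ((Set.Ioc b c).indicator (fun _ => (1:ℝ)) s) := by
    intro s
    unfold Haar
    rw [← ha', ← hb', ← hc']
    by_cases h1 : s ∈ Set.Ioc a b
    · have h2 : s ∉ Set.Ioc b c := fun h => absurd h1.2 (not_le.mpr h.1)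
      simp [h1, h2]
    · by_cases h2 : s ∈ Set.Ioc b c
      · simp [h1, h2]
      · simp [h1, h2]
  unfold FS
  rw [intervalIntegral.integral_congr (fun s _ => hH s),
    intervalIntegral.integral_sub ((hind a b).const_mul _) ((hind b c).const_mul _),
    intervalIntegral.integral_const_mul, intervalIntegral.integral_const_mul,
    integral_indicator_Ioc a b t ha0 hab, integral_indicator_Ioc b c t hb0 hbc]
  ring

lemma integrable_piece {α : ℝ} (hα : α ∈ Set.Ioo (0:ℝ) 1) (s c a b : ℝ) :
    IntervalIntegrable (fun u => (s-u)^(-α) * max (u - c) 0) volume a b := by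
  have h1 : IntervalIntegrable (fun u : ℝ => (s-u)^(-α)) volume a b := by
    have h0 := intervalIntegral.intervalIntegrable_rpow' (a := s - b) (b := s - a) (r := -α)
      (by linarith [hα.2])
    have h2 := h0.comp_sub_left s
    simpa using h2.symm
  exact h1.mul_continuousOn (((continuous_id.sub continuous_const).max
    continuous_const).continuousOn)

lemma integral_piece {α : ℝ} (hα : α ∈ Set.Ioo (0:ℝ) 1) {c : ℝ} (hc : 0 ≤ c) (s : ℝ) :
    ∫ u in (0:ℝ)..s, (s-u)^(-α) * max (u - c) 0
      = (max (s-c) 0)^(2-α) / ((1-α)*(2-α)) := by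
  obtain ⟨hα0, hα1⟩ := hα
  rcases le_or_gt s c with h | h
  · have hz : ∀ u ∈ Set.uIcc (0:ℝ) s, (s-u)^(-α) * max (u - c) 0 = 0 := by
      intro u hu
      have hu2 : u ≤ c := le_trans hu.2 (max_le hc h)
      rw [max_eq_right (by linarith)]
      ring
    rw [intervalIntegral.integral_congr hz]
    simp [max_eq_right (show s - c ≤ 0 by linarith), Real.zero_rpow (show 2-α ≠ 0 by linarith)]
  · have hd : 0 < s - c := by linarith
    have hsplit : (∫ u in (0:ℝ)..c, (s-u)^(-α) * max (u - c) 0)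
        + (∫ u in c..s, (s-u)^(-α) * max (u - c) 0)
        = ∫ u in (0:ℝ)..s, (s-u)^(-α) * max (u - c) 0 :=
      intervalIntegral.integral_add_adjacent_intervals
        (integrable_piece ⟨hα0, hα1⟩ s c 0 c) (integrable_piece ⟨hα0, hα1⟩ s c c s)
    rw [← hsplit]
    have e1 : (∫ u in (0:ℝ)..c, (s-u)^(-α) * max (u - c) 0) = 0 := by
      apply intervalIntegral.integral_zero_ae
      filter_upwards with u hu
      rw [Set.uIoc_of_le hc] at hu
      rw [max_eq_right (by linarith [hu.2])]
      ring
    have e2 : (∫ u in c..s, (s-u)^(-α) * max (u - c) 0)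
        = ∫ u in c..s, (fun v => v^(-α) * (s - c - v)) (s - u) := by
      apply intervalIntegral.integral_congr
      intro u hu
      rw [Set.uIcc_of_le (by linarith)] at hu
      simp only
      rw [max_eq_left (by linarith [hu.1])]
      congr 1
      ring
    rw [e1, e2, intervalIntegral.integral_comp_sub_left (fun v => v^(-α) * (s - c - v)) s,
      sub_self]
    have e3 : (∫ v in (0:ℝ)..(s-c), v^(-α) * (s - c - v))
        = ∫ v in (0:ℝ)..(s-c), ((s-c) * v^(-α) - v^(1-α)) := by
      apply intervalIntegral.integral_congr_ae
      filter_upwards with v hv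
      rw [Set.uIoc_of_le (by linarith)] at hv
      have hv0 : 0 < v := hv.1
      rw [show (1-α) = -α + 1 by ring, Real.rpow_add_one hv0.ne']
      ring
    have h1a : (1:ℝ) - α ≠ 0 := by linarith
    have h2a : (2:ℝ) - α ≠ 0 := by linarith
    rw [e3, intervalIntegral.integral_sub
        ((intervalIntegral.intervalIntegrable_rpow' (by linarith)).const_mul _)
        (intervalIntegral.intervalIntegrable_rpow' (by linarith)),
      intervalIntegral.integral_const_mul, integral_rpow (Or.inl (by linarith)),
      integral_rpow (Or.inl (by linarith))]
    rw [Real.zero_rpow (by linarith), Real.zero_rpow (by linarith),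
      max_eq_left hd.le, show (-α+1) = 1-α by ring, show (1-α+1) = 2-α by ring]
    have e4 : (s-c) * (s-c)^(1-α) = (s-c)^(2-α) := by
      rw [show (2-α) = (1-α)+1 by ring, Real.rpow_add_one hd.ne']
      ring
    rw [sub_zero, sub_zero, zero_add]
    field_simp
    linear_combination (2 - α) * e4

lemma hasDerivAt_max_rpow0 {p : ℝ} (hp : 1 < p) (x : ℝ) :
    HasDerivAt (fun y : ℝ => (max y 0)^p) (p * (max x 0)^(p-1)) x := by
  have hp1 : (0:ℝ) < p - 1 := by linarith
  rcases lt_trichotomy x 0 with h | h | h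
  · have hev : (fun y : ℝ => (max y 0)^p) =ᶠ[nhds x] (fun _ => (0:ℝ)) := by
      filter_upwards [Iio_mem_nhds h] with y hy
      rw [max_eq_right (le_of_lt hy), Real.zero_rpow (by linarith)]
    have := (hasDerivAt_const x (0:ℝ)).congr_of_eventuallyEq hev
    refine this.congr_deriv ?_
    rw [max_eq_right h.le, Real.zero_rpow hp1.ne']
    ring
  · subst h
    have hval : p * (max (0:ℝ) 0)^(p-1) = 0 := by
      rw [max_self, Real.zero_rpow hp1.ne']; ring
    rw [hval, hasDerivAt_iff_tendsto_slope]
    apply squeeze_zero_norm' (a := fun y : ℝ => |y|^(p-1))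
    · filter_upwards [self_mem_nhdsWithin] with y (hy : y ≠ 0)
      rw [slope_def_field, max_self, Real.zero_rpow (show p ≠ 0 by linarith),
        sub_zero, sub_zero]
      rcases lt_or_gt_of_ne hy with hy' | hy'
      · rw [max_eq_right hy'.le, Real.zero_rpow (show p ≠ 0 by linarith), zero_div,
          norm_zero]
        positivity
      · rw [max_eq_left hy'.le, show y^p / y = y^p / y^(1:ℝ) by rw [Real.rpow_one],
          ← Real.rpow_sub hy', Real.norm_eq_abs,
          abs_of_nonneg (Real.rpow_nonneg hy'.le _), abs_of_pos hy']
    · have hcont : Filter.Tendsto (fun y : ℝ => |y|^(p-1)) (nhds 0) (nhds (|(0:ℝ)|^(p-1))) := by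
        apply ContinuousAt.tendsto
        exact (continuous_abs.continuousAt).rpow_const (Or.inr hp1.le)
      rw [abs_zero, Real.zero_rpow hp1.ne'] at hcont
      exact hcont.mono_left nhdsWithin_le_nhds
  · have hev : (fun y : ℝ => (max y 0)^p) =ᶠ[nhds x] (fun y => y^p) := by
      filter_upwards [Ioi_mem_nhds h] with y hy
      rw [max_eq_left (le_of_lt hy)]
    have := (Real.hasDerivAt_rpow_const (p := p) (Or.inl h.ne')).congr_of_eventuallyEq hev
    refine this.congr_deriv ?_
    rw [max_eq_left h.le]

lemma hasDerivAt_max_rpow {p : ℝ} (hp : 1 < p) (c x : ℝ) :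
    HasDerivAt (fun s : ℝ => (max (s - c) 0)^p) (p * (max (x - c) 0)^(p-1)) x := by
  have h := (hasDerivAt_max_rpow0 hp (x - c)).comp x ((hasDerivAt_id x).sub_const c)
  exact h.congr_deriv (mul_one _)

theorem fractional_derivative_FS_left (α : ℝ) (hα : α ∈ Set.Ioo (0 : ℝ) 1)
    (m k : ℕ) (hk : k < 2 ^ m) (t : ℝ) (ht : t ∈ Set.Ioo (0 : ℝ) 1) :
    Dleft α (FS m k) t =
      (2 : ℝ) ^ ((m : ℝ) * (α - 1 / 2)) / Real.Gamma (2 - α) *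
        ((max (2 ^ m * t - (k : ℝ)) 0) ^ (1 - α)
          - 2 * (max (2 ^ m * t - (k : ℝ) - 0.5) 0) ^ (1 - α)
          + (max (2 ^ m * t - (k : ℝ) - 1) 0) ^ (1 - α)) := by
  unfold Dleft
  obtain ⟨hα0, hα1⟩ := hα
  set a := (k:ℝ)/2^m with ha'
  set b := ((k:ℝ)+0.5)/2^m with hb'
  set c := ((k:ℝ)+1)/2^m with hc'
  set C : ℝ := 2^((m:ℝ)/2) with hC'
  have h2m : (0:ℝ) < 2^m := by positivity
  have ha0 : 0 ≤ a := by positivity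
  have hb0 : 0 ≤ b := by rw [hb']; positivity
  have hc0 : 0 ≤ c := by rw [hc']; positivity
  have h1a : (1:ℝ) - α ≠ 0 := by linarith
  have h2a : (2:ℝ) - α ≠ 0 := by linarith
  have hfun : (fun s : ℝ => ∫ u in (0:ℝ)..s, (s-u)^(-α) * FS m k u)
      = fun s : ℝ => C/((1-α)*(2-α)) * ((max (s-a) 0)^(2-α)
          - 2*(max (s-b) 0)^(2-α) + (max (s-c) 0)^(2-α)) := by
    funext s
    have e0 : ∀ u, (s-u)^(-α) * FS m k u
        = (C*((s-u)^(-α) * max (u-a) 0) - 2*C*((s-u)^(-α) * max (u-b) 0))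
          + C*((s-u)^(-α) * max (u-c) 0) := by
      intro u; rw [FS_eq]; ring
    rw [intervalIntegral.integral_congr (fun u _ => e0 u),
      intervalIntegral.integral_add
        (((integrable_piece ⟨hα0, hα1⟩ s a 0 s).const_mul _).sub
          ((integrable_piece ⟨hα0, hα1⟩ s b 0 s).const_mul _))
        ((integrable_piece ⟨hα0, hα1⟩ s c 0 s).const_mul _),
      intervalIntegral.integral_sub
        ((integrable_piece ⟨hα0, hα1⟩ s a 0 s).const_mul _)
        ((integrable_piece ⟨hα0, hα1⟩ s b 0 s).const_mul _),
      intervalIntegral.integral_const_mul, intervalIntegral.integral_const_mul,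
      intervalIntegral.integral_const_mul,
      integral_piece ⟨hα0, hα1⟩ ha0 s, integral_piece ⟨hα0, hα1⟩ hb0 s,
      integral_piece ⟨hα0, hα1⟩ hc0 s]
    field_simp
  have hp : (1:ℝ) < 2 - α := by linarith
  have hd1 := hasDerivAt_max_rpow hp a t
  have hd2 := hasDerivAt_max_rpow hp b t
  have hd3 := hasDerivAt_max_rpow hp c t
  rw [show (2-α)-1 = 1-α by ring] at hd1 hd2 hd3
  have hD := ((hd1.sub (hd2.const_mul 2)).add hd3).const_mul (C/((1-α)*(2-α)))
  have hD' : HasDerivAt (fun s => C/((1-α)*(2-α)) * ((max (s-a) 0)^(2-α)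
      - 2*(max (s-b) 0)^(2-α) + (max (s-c) 0)^(2-α))) _ t := hD
  rw [hfun, hD'.deriv]
  -- algebra
  have hG : Real.Gamma (2-α) = (1-α) * Real.Gamma (1-α) := by
    rw [show (2-α) = (1-α)+1 by ring, Real.Gamma_add_one h1a]
  have hGpos : 0 < Real.Gamma (1-α) := Real.Gamma_pos_of_pos (by linarith)
  have hmax : ∀ x : ℝ, max (x / 2^m) 0 = (max x 0) / 2^m := by
    intro x
    rw [show (0:ℝ) = 0/2^m by simp]
    rw [max_div_div_right h2m.le]
    simp
  have hP : (max (t-a) 0)^(1-α) = (max (2^m*t-(k:ℝ)) 0)^(1-α) / ((2:ℝ)^m)^(1-α) := by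
    rw [show t - a = (2^m*t-(k:ℝ))/2^m by rw [ha']; field_simp, hmax,
      Real.div_rpow (le_max_right _ _) h2m.le]
  have hQ : (max (t-b) 0)^(1-α) = (max (2^m*t-(k:ℝ)-0.5) 0)^(1-α) / ((2:ℝ)^m)^(1-α) := by
    rw [show t - b = (2^m*t-(k:ℝ)-0.5)/2^m by rw [hb']; field_simp; ring, hmax,
      Real.div_rpow (le_max_right _ _) h2m.le]
  have hR : (max (t-c) 0)^(1-α) = (max (2^m*t-(k:ℝ)-1) 0)^(1-α) / ((2:ℝ)^m)^(1-α) := by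
    rw [show t - c = (2^m*t-(k:ℝ)-1)/2^m by rw [hc']; field_simp; ring, hmax,
      Real.div_rpow (le_max_right _ _) h2m.le]
  have hpow : (2:ℝ)^((m:ℝ)*(α-1/2)) * ((2:ℝ)^m)^(1-α) = C := by
    rw [show ((2:ℝ)^m : ℝ) = (2:ℝ)^((m:ℝ)) from (Real.rpow_natCast 2 m).symm,
      ← Real.rpow_mul (by norm_num), ← Real.rpow_add (by norm_num), hC']
    congr 1; ring
  have hpm : (0:ℝ) < ((2:ℝ)^m)^(1-α) := Real.rpow_pos_of_pos h2m _
  rw [hP, hQ, hR, hG, ← hpow]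
  field_simp
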